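/- For every t < 0, the integral identity ∫₀^∞ sinh x · (sinh(−t))^{3/2}/(cosh x + cosh t)^{5/2} dx = (2/3)·(sinh(−t)/(1 + cosh t))^{3/2} holds. Moreover the function t ↦ (sinh(−t)/(1 + cosh t))^{3/2} is strictly decreasing on (−∞,0) and tends to 0 as t → 0⁻. -/

import Mathlib

open Filter Set MeasureTheory

lemma rosenau_half_angle (t : ℝ) :
    Real.sinh (-t) / (1 + Real.cosh t) = Real.sinh (-t/2) / Real.cosh (-t/2) := by
  have h1 : Real.sinh (-t) = 2 * Real.sinh (-t/2) * Real.cosh (-t/2) := by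
    rw [show (-t) = 2 * (-t/2) by ring, Real.sinh_two_mul]
    norm_num
  have h2 : 1 + Real.cosh t = 2 * Real.cosh (-t/2) ^ 2 := by
    have : Real.cosh t = Real.cosh (2 * (-t/2)) := by rw [show 2 * (-t/2) = -t by ring, Real.cosh_neg]
    rw [this, Real.cosh_two_mul, Real.cosh_sq']
    ring
  have hc : Real.cosh (-t/2) ≠ 0 := (Real.cosh_pos _).ne'
  rw [h1, h2]
  field_simp

lemma rosenau_integral (t : ℝ) (ht : t < 0) :
    ∫ x in Set.Ioi (0 : ℝ),
        Real.sinh x * Real.sinh (-t) ^ ((3 : ℝ) / 2)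
          / (Real.cosh x + Real.cosh t) ^ ((5 : ℝ) / 2)
        = 2 / 3 * (Real.sinh (-t) / (1 + Real.cosh t)) ^ ((3 : ℝ) / 2) := by
  set c := Real.cosh t with hc
  have hpos : ∀ x : ℝ, 0 < Real.cosh x + c := fun x => by
    have := Real.cosh_pos (x := x); have := Real.cosh_pos (x := t); positivity
  set g : ℝ → ℝ := fun x => -(2/3) * (Real.cosh x + c) ^ (-(3:ℝ)/2) with hg
  set g' : ℝ → ℝ := fun x => Real.sinh x * (Real.cosh x + c) ^ (-(5:ℝ)/2) with hg'
  have hderiv : ∀ x : ℝ, HasDerivAt g (g' x) x := by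
    intro x
    have h1 : HasDerivAt (fun x : ℝ => Real.cosh x + c) (Real.sinh x) x :=
      (Real.hasDerivAt_cosh x).add_const c
    have h2 := (h1.rpow_const (p := -(3:ℝ)/2) (Or.inl (hpos x).ne')).const_mul (-(2/3) : ℝ)
    refine h2.congr_deriv ?_
    have : (-(3:ℝ)/2 - 1) = -(5:ℝ)/2 := by norm_num
    rw [this]
    ring
  have hnn : ∀ x ∈ Set.Ioi (0:ℝ), 0 ≤ g' x := by
    intro x hx
    have h1 : 0 ≤ Real.sinh x := (Real.sinh_pos_iff.2 hx).le
    have h2 : 0 < (Real.cosh x + c) ^ (-(5:ℝ)/2) := Real.rpow_pos_of_pos (hpos x) _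
    positivity
  have htend : Tendsto g atTop (nhds 0) := by
    have hcosh : Tendsto Real.cosh atTop atTop := by
      apply tendsto_atTop_mono (fun x => ?_) (Real.tendsto_exp_atTop.atTop_div_const (by norm_num : (0:ℝ) < 2))
      rw [Real.cosh_eq]
      have := (Real.exp_pos (-x)).le
      linarith
    have h1 : Tendsto (fun x : ℝ => Real.cosh x + c) atTop atTop :=
      tendsto_atTop_add_const_right _ c hcosh
    have h2 : Tendsto (fun y : ℝ => y ^ (-(3:ℝ)/2)) atTop (nhds 0) := by
      have := tendsto_rpow_neg_atTop (y := (3:ℝ)/2) (by norm_num)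
      simpa [neg_div] using this
    have h3 := (h2.comp h1).const_mul (-(2/3) : ℝ)
    have hgeq : g = fun x => -(2/3) * ((fun y : ℝ => y ^ (-(3:ℝ)/2)) ∘ (fun x : ℝ => Real.cosh x + c)) x := rfl
    rw [hgeq]
    simpa using h3
  have hcont : ContinuousWithinAt g (Set.Ici (0:ℝ)) 0 :=
    (hderiv 0).continuousAt.continuousWithinAt
  have key : ∫ x in Set.Ioi (0:ℝ), g' x = 0 - g 0 :=
    integral_Ioi_of_hasDerivAt_of_nonneg hcont (fun x _ => hderiv x) hnn htend
  have hg0 : 0 - g 0 = 2/3 * (1 + c) ^ (-(3:ℝ)/2) := by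
    simp only [hg, Real.cosh_zero]
    ring
  set K : ℝ := Real.sinh (-t) ^ ((3:ℝ)/2) with hK
  have hintegrand : ∀ x : ℝ,
      Real.sinh x * K / (Real.cosh x + c) ^ ((5:ℝ)/2) = K * g' x := by
    intro x
    have h1 : (Real.cosh x + c) ^ (-(5:ℝ)/2) = ((Real.cosh x + c) ^ ((5:ℝ)/2))⁻¹ := by
      rw [show (-(5:ℝ)/2) = -((5:ℝ)/2) by norm_num, Real.rpow_neg (hpos x).le]
    simp only [hg']
    rw [h1, div_eq_mul_inv]
    ring
  calc ∫ x in Set.Ioi (0:ℝ), Real.sinh x * K / (Real.cosh x + c) ^ ((5:ℝ)/2)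
      = ∫ x in Set.Ioi (0:ℝ), K * g' x := by
        apply integral_congr_ae
        filter_upwards with x using hintegrand x
    _ = K * ∫ x in Set.Ioi (0:ℝ), g' x := integral_const_mul K _
    _ = K * (2/3 * (1 + c) ^ (-(3:ℝ)/2)) := by rw [key, hg0]
    _ = 2/3 * (Real.sinh (-t) / (1 + c)) ^ ((3:ℝ)/2) := by
        have hs : 0 ≤ Real.sinh (-t) := (Real.sinh_pos_iff.2 (by linarith)).le
        have hd : 0 < 1 + c := by have := Real.cosh_pos (x := t); positivity
        rw [Real.div_rpow hs hd.le, show (-(3:ℝ)/2) = -((3:ℝ)/2) by norm_num,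
          Real.rpow_neg hd.le, div_eq_mul_inv]
        ring

/-- For every `t < 0`,
`∫₀^∞ sinh x · sinh(-t)^{3/2}/(cosh x + cosh t)^{5/2} dx = (2/3)(sinh(-t)/(1 + cosh t))^{3/2}`;
moreover `t ↦ (sinh(-t)/(1 + cosh t))^{3/2}` is strictly decreasing on `(-∞, 0)` and tends
to `0` as `t → 0⁻`. -/
theorem rosenau_product_L1_norm :
    (∀ t : ℝ, t < 0 →
      ∫ x in Set.Ioi (0 : ℝ),
        Real.sinh x * Real.sinh (-t) ^ ((3 : ℝ) / 2)
          / (Real.cosh x + Real.cosh t) ^ ((5 : ℝ) / 2)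
        = 2 / 3 * (Real.sinh (-t) / (1 + Real.cosh t)) ^ ((3 : ℝ) / 2)) ∧
    StrictAntiOn (fun t => (Real.sinh (-t) / (1 + Real.cosh t)) ^ ((3 : ℝ) / 2))
      (Set.Iio 0) ∧
    Tendsto (fun t => (Real.sinh (-t) / (1 + Real.cosh t)) ^ ((3 : ℝ) / 2))
      (nhdsWithin 0 (Set.Iio 0)) (nhds 0) := by
  refine ⟨fun t ht => rosenau_integral t ht, ?_, ?_⟩
  · intro a ha b hb hab
    simp only [Set.mem_Iio] at ha hb
    have hqb : 0 ≤ Real.sinh (-b) / (1 + Real.cosh b) := by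
      have h1 : 0 ≤ Real.sinh (-b) := (Real.sinh_pos_iff.2 (by linarith)).le
      have h2 : 0 < 1 + Real.cosh b := by have := Real.cosh_pos (x := b); positivity
      positivity
    apply Real.rpow_lt_rpow hqb ?_ (by norm_num)
    rw [rosenau_half_angle a, rosenau_half_angle b]
    rw [div_lt_div_iff₀ (Real.cosh_pos _) (Real.cosh_pos _)]
    have hsub := Real.sinh_sub (-a/2) (-b/2)
    have harg : -a/2 - -b/2 = (b - a)/2 := by ring
    have hpos : 0 < Real.sinh ((b - a)/2) := Real.sinh_pos_iff.2 (by linarith)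
    rw [harg] at hsub
    linarith [hsub]
  · have hbase : Tendsto (fun t : ℝ => Real.sinh (-t) / (1 + Real.cosh t))
        (nhdsWithin 0 (Set.Iio 0)) (nhds 0) := by
      have hc : ContinuousAt (fun t : ℝ => Real.sinh (-t) / (1 + Real.cosh t)) 0 := by
        apply ContinuousAt.div
        · exact (Real.continuous_sinh.comp continuous_neg).continuousAt
        · exact (continuous_const.add Real.continuous_cosh).continuousAt
        · norm_num [Real.cosh_zero]
      have := hc.tendsto
      simp only [neg_zero, Real.sinh_zero, Real.cosh_zero, zero_div] at this
      exact this.mono_left nhdsWithin_le_nhds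
    have := hbase.rpow_const (p := (3:ℝ)/2) (Or.inr (by norm_num))
    simpa [Real.zero_rpow (by norm_num : ((3:ℝ)/2) ≠ 0)] using this
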